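/- A model tree T_n with branching numbers n(r) ≥ 1 is stochastically complete if and only if Σ_{r=0}^∞ 1/n(r) = ∞. Equivalently: for a model tree rooted at x₀ where every vertex at distance r from x₀ has exactly n(r) neighbors at distance r+1 (and, for r ≥ 1, exactly one neighbor at distance r−1), there exists a bounded positive function v with Δv = λv for some (equivalently all) λ < 0 if and only if Σ 1/n(r) < ∞. -/

import Mathlib

open Finset

/-- The graph Laplacian `Δf(x) = ∑_{y ∼ x} (f(x) - f(y))`. -/
def graphLap {V : Type*} (G : SimpleGraph V) [G.LocallyFinite] (f : V → ℝ) (x : V) : ℝ :=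
  ∑ y ∈ G.neighborFinset x, (f x - f y)

/-- `m_{+1}(x)`: the number of neighbors of `x` in the next sphere about `x₀`. -/
noncomputable def mPlus {V : Type*} (G : SimpleGraph V) [G.LocallyFinite] (x₀ x : V) : ℕ :=
  ((G.neighborFinset x).filter (fun y => G.dist x₀ y = G.dist x₀ x + 1)).card

/-- `m_{-1}(x)`: the number of neighbors of `x` in the previous sphere about `x₀`. -/
noncomputable def mMinus {V : Type*} (G : SimpleGraph V) [G.LocallyFinite] (x₀ x : V) : ℕ :=
  ((G.neighborFinset x).filter (fun y => G.dist x₀ y + 1 = G.dist x₀ x)).card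



noncomputable def gSeq (l : ℝ) (n : ℕ → ℕ) : ℕ → ℝ × ℝ
  | 0 => (1, -l / n 0)
  | (r+1) =>
      ((gSeq l n r).1 + (gSeq l n r).2,
       ((gSeq l n r).2 - l * ((gSeq l n r).1 + (gSeq l n r).2)) / n (r+1))

lemma gSeq_fst_succ (l : ℝ) (n : ℕ → ℕ) (r : ℕ) :
    (gSeq l n (r+1)).1 = (gSeq l n r).1 + (gSeq l n r).2 := by rw [gSeq]

lemma gSeq_snd_succ (l : ℝ) (n : ℕ → ℕ) (r : ℕ) :
    (gSeq l n (r+1)).2 = ((gSeq l n r).2 - l * (gSeq l n (r+1)).1) / n (r+1) := by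
  rw [gSeq]

lemma gSeq_pos {l : ℝ} (hl : l < 0) {n : ℕ → ℕ} (hn : ∀ r, 1 ≤ n r) (r : ℕ) :
    0 < (gSeq l n r).1 ∧ 0 < (gSeq l n r).2 := by
  induction r with
  | zero =>
      constructor
      · norm_num [gSeq]
      · rw [gSeq]
        have : (0:ℝ) < n 0 := by exact_mod_cast (hn 0)
        exact div_pos (by linarith) this
  | succ r ih =>
      have h1 : 0 < (gSeq l n (r+1)).1 := by
        rw [gSeq_fst_succ]; linarith [ih.1, ih.2]
      refine ⟨h1, ?_⟩
      rw [gSeq_snd_succ]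
      have hnr : (0:ℝ) < n (r+1) := by exact_mod_cast (hn (r+1))
      have : 0 < (gSeq l n r).2 - l * (gSeq l n (r+1)).1 := by nlinarith [ih.2]
      positivity

lemma gSeq_fst_mono {l : ℝ} (hl : l < 0) {n : ℕ → ℕ} (hn : ∀ r, 1 ≤ n r) :
    Monotone (fun r => (gSeq l n r).1) := by
  apply monotone_nat_of_le_succ
  intro r
  rw [gSeq_fst_succ]
  linarith [(gSeq_pos hl hn r).2]

/-- If `∑ 1/n r < ∞` then the radial solution is bounded. -/
lemma gSeq_bounded {l : ℝ} (hl : l < 0) {n : ℕ → ℕ} (hn : ∀ r, 1 ≤ n r)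
    (hs : Summable (fun r : ℕ => 1 / (n r : ℝ))) :
    ∃ C : ℝ, ∀ r, (gSeq l n r).1 ≤ C := by
  set g : ℕ → ℝ := fun r => (gSeq l n r).1 with hg
  set u : ℕ → ℝ := fun r => (gSeq l n r).2 with hu
  have gpos : ∀ r, 0 < g r := fun r => (gSeq_pos hl hn r).1
  have upos : ∀ r, 0 < u r := fun r => (gSeq_pos hl hn r).2
  have npos : ∀ r, (0:ℝ) < n r := fun r => by exact_mod_cast hn r
  set t : ℕ → ℝ := fun r => u r / g r with ht
  have tpos : ∀ r, 0 < t r := fun r => div_pos (upos r) (gpos r)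
  -- recursion inequality for t
  have trec : ∀ r, t (r+1) ≤ (t r + (-l)) / n (r+1) := by
    intro r
    have hgs : g (r+1) = g r + u r := gSeq_fst_succ l n r
    have hus : u (r+1) = (u r - l * g (r+1)) / n (r+1) := gSeq_snd_succ l n r
    have hgne : g (r+1) ≠ 0 := (gpos (r+1)).ne'
    have h1 : t (r+1) = (u r / g (r+1) + (-l)) / n (r+1) := by
      show u (r+1) / g (r+1) = _
      rw [hus, div_right_comm, sub_div, mul_div_assoc, div_self hgne, mul_one,
        sub_eq_add_neg]
    rw [h1]
    rw [div_le_div_iff_of_pos_right (npos (r+1))]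
    have h2 : u r / g (r+1) ≤ u r / g r := by
      apply div_le_div_of_nonneg_left (upos r).le (gpos r)
      rw [hgs]; linarith [upos r]
    linarith
  -- eventually n r ≥ 2
  obtain ⟨R, hR⟩ : ∃ R, ∀ r ≥ R, 2 ≤ n r := by
    have h0 := hs.tendsto_atTop_zero
    have hev : ∀ᶠ r in Filter.atTop, 1 / (n r : ℝ) < 1 :=
      h0.eventually_lt_const (by norm_num)
    rw [Filter.eventually_atTop] at hev
    obtain ⟨R, hR⟩ := hev
    refine ⟨R, fun r hr => ?_⟩
    have h2 := hR r hr
    by_contra hcon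
    push_neg at hcon
    have hn1 := hn r
    have h1 : n r = 1 := by omega
    rw [h1] at h2
    norm_num at h2
  -- t is bounded on [R, ∞) by M
  set M : ℝ := max (t R) (-l) with hM
  have hMl : -l ≤ M := le_max_right _ _
  have hMpos : 0 < M := lt_of_lt_of_le (by linarith) hMl
  have tbdd : ∀ r ≥ R, t r ≤ M := by
    intro r hr
    induction r with
    | zero =>
        have hR0 : R = 0 := Nat.le_zero.mp hr
        subst hR0
        exact le_max_left _ _
    | succ r ih =>
      rcases Nat.lt_or_ge R (r+1) with h | h
      · have hrR : R ≤ r := Nat.lt_succ_iff.mp h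
        have h2 : (2:ℝ) ≤ n (r+1) := by exact_mod_cast hR (r+1) (by omega)
        calc t (r+1) ≤ (t r + (-l)) / n (r+1) := trec r
          _ ≤ (M + M) / 2 := by
              apply div_le_div₀ (by linarith) (by linarith [ih hrR]) (by norm_num) h2
          _ = M := by ring
      · have : R = r + 1 := le_antisymm hr h
        rw [← this]; exact le_max_left _ _
  -- summability of t
  have tle : ∀ r ≥ R + 1, t r ≤ (M + (-l)) * (1 / n r) := by
    intro r hr
    obtain ⟨s, rfl⟩ : ∃ s, r = s + 1 := ⟨r - 1, by omega⟩
    calc t (s+1) ≤ (t s + (-l)) / n (s+1) := trec s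
      _ ≤ (M + (-l)) * (1 / n (s+1)) := by
          rw [mul_one_div, div_le_div_iff₀ (npos (s+1)) (npos (s+1))]
          have := tbdd s (by omega)
          nlinarith [npos (s+1)]
  have tsum : Summable t := by
    rw [← summable_nat_add_iff (R + 1)]
    apply Summable.of_nonneg_of_le (fun r => (tpos _).le)
      (fun r => tle (r + (R+1)) (by omega))
    exact ((summable_nat_add_iff (R+1)).mpr hs).mul_left _
  -- g r ≤ exp (∑ t)
  refine ⟨Real.exp (∑' r, t r), fun r => ?_⟩
  have key : ∀ r, g r ≤ Real.exp (∑ k ∈ Finset.range r, t k) := by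
    intro r
    induction r with
    | zero => simp [hg, gSeq]
    | succ r ih =>
      have hgs : g (r+1) = g r * (1 + t r) := by
        have h1 : g (r+1) = g r + u r := gSeq_fst_succ l n r
        have h2 : g r ≠ 0 := (gpos r).ne'
        rw [h1]
        show g r + u r = g r * (1 + u r / g r)
        field_simp
      rw [hgs, Finset.sum_range_succ, Real.exp_add]
      have h1 : 1 + t r ≤ Real.exp (t r) := Real.add_one_le_exp (t r) |>.trans_eq' (by ring_nf)
      have := mul_le_mul ih h1 (by linarith [tpos r]) (Real.exp_nonneg _)
      linarith [this]
  calc g r ≤ Real.exp (∑ k ∈ Finset.range r, t k) := key r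
    _ ≤ Real.exp (∑' r, t r) := by
        apply Real.exp_le_exp.mpr
        exact Summable.sum_le_tsum _ (fun k _ => (tpos k).le) tsum


set_option linter.unusedSectionVars false

section Graph

variable {V : Type*} (G : SimpleGraph V) [G.LocallyFinite] (x₀ : V) (n : ℕ → ℕ)

lemma adj_dist_le (hG : G.Connected) {x y : V} (h : G.Adj x y) :
    G.dist x₀ y ≤ G.dist x₀ x + 1 := by
  calc G.dist x₀ y ≤ G.dist x₀ x + G.dist x y := hG.dist_triangle
    _ ≤ G.dist x₀ x + 1 := by
        have := SimpleGraph.dist_le h.toWalk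
        simp at this
        omega

lemma exists_back (hG : G.Connected) {x : V} {r : ℕ} (hx : G.dist x₀ x = r + 1) :
    ∃ z, G.Adj z x ∧ G.dist x₀ z = r := by
  obtain ⟨p, hp⟩ := hG.exists_walk_length_eq_dist x₀ x
  cases hq : p.reverse with
  | nil =>
      have := congrArg SimpleGraph.Walk.length hq
      simp [hp, hx] at this
      simp at hx
  | cons h q =>
      rename_i z
      refine ⟨z, h.symm, ?_⟩
      have hlen : q.length = r := by
        have := congrArg SimpleGraph.Walk.length hq
        simp [hp, hx] at this
        omega
      have h1 : G.dist x₀ z ≤ r := by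
        have := SimpleGraph.dist_le q.reverse
        simpa [hlen] using this
      have h2 : r + 1 ≤ G.dist x₀ z + 1 := by
        rw [← hx]
        exact adj_dist_le G x₀ hG h.symm
      omega

lemma dist_root_eq_one (hG : G.Connected) {y : V} (h : G.Adj x₀ y) :
    G.dist x₀ y = 1 := by
  have h0 : G.dist x₀ x₀ = 0 := SimpleGraph.dist_self
  have h1 : G.dist x₀ y ≤ G.dist x₀ x₀ + 1 := adj_dist_le G x₀ hG h
  have h2 : G.dist x₀ y ≠ 0 := by
    rw [Ne, hG.dist_eq_zero_iff]
    exact fun hc => G.loopless.irrefl y (hc ▸ h)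
  omega

/-- The sphere of radius `r` about `x₀`, as a finset. -/
noncomputable def sph : ℕ → Finset V
  | 0 => {x₀}
  | (r+1) => letI := Classical.decEq V
      (sph r).biUnion (fun z =>
        (G.neighborFinset z).filter (fun y => G.dist x₀ y = G.dist x₀ z + 1))

lemma mem_sph (hG : G.Connected) : ∀ r (x : V), x ∈ sph G x₀ r ↔ G.dist x₀ x = r := by
  intro r
  induction r with
  | zero =>
      intro x
      rw [sph]
      simp only [Finset.mem_singleton]
      rw [hG.dist_eq_zero_iff]
      exact ⟨fun h => h ▸ rfl, fun h => h.symm⟩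
  | succ r ih =>
      intro x
      rw [sph]
      letI := Classical.decEq V
      simp only [Finset.mem_biUnion, Finset.mem_filter, SimpleGraph.mem_neighborFinset]
      constructor
      · rintro ⟨z, hz, hadj, hd⟩
        rw [ih z] at hz
        rw [hd, hz]
      · intro hd
        obtain ⟨z, hadj, hdz⟩ := exists_back G x₀ hG hd
        exact ⟨z, (ih z).mpr hdz, hadj, by rw [hd, hdz]⟩


/-- Forward neighbors. -/
noncomputable def fwd (x : V) : Finset V :=
  (G.neighborFinset x).filter (fun y => G.dist x₀ y = G.dist x₀ x + 1)

/-- Backward neighbors. -/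
noncomputable def bwd (x : V) : Finset V :=
  (G.neighborFinset x).filter (fun y => G.dist x₀ y + 1 = G.dist x₀ x)

lemma fwd_card (hplus : ∀ x : V, mPlus G x₀ x = n (G.dist x₀ x)) (x : V) :
    (fwd G x₀ x).card = n (G.dist x₀ x) := hplus x

lemma bwd_card (hminus : ∀ x : V, x ≠ x₀ → mMinus G x₀ x = 1) {x : V} (hx : x ≠ x₀) :
    (bwd G x₀ x).card = 1 := hminus x hx

lemma fwd_bwd_disjoint (x : V) : Disjoint (fwd G x₀ x) (bwd G x₀ x) := by
  rw [Finset.disjoint_left]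
  intro y hy1 hy2
  rw [fwd, Finset.mem_filter] at hy1
  rw [bwd, Finset.mem_filter] at hy2
  omega

lemma sum_nbr_split (hplus : ∀ x : V, mPlus G x₀ x = n (G.dist x₀ x))
    (hminus : ∀ x : V, x ≠ x₀ → mMinus G x₀ x = 1)
    (hdeg : ∀ x : V, x ≠ x₀ → G.degree x = n (G.dist x₀ x) + 1)
    {x : V} (hx : x ≠ x₀) (f : V → ℝ) :
    ∑ y ∈ G.neighborFinset x, f y
      = ∑ y ∈ fwd G x₀ x, f y + ∑ y ∈ bwd G x₀ x, f y := by
  classical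
  have hunion : fwd G x₀ x ∪ bwd G x₀ x = G.neighborFinset x := by
    apply Finset.eq_of_subset_of_card_le
    · exact Finset.union_subset (Finset.filter_subset _ _) (Finset.filter_subset _ _)
    · rw [Finset.card_union_of_disjoint (fwd_bwd_disjoint G x₀ x), fwd_card G x₀ n hplus,
        bwd_card G x₀ hminus hx, SimpleGraph.card_neighborFinset_eq_degree, hdeg x hx]
  rw [← hunion, Finset.sum_union (fwd_bwd_disjoint G x₀ x)]

lemma nbr_root (hG : G.Connected) {y : V} (hy : y ∈ G.neighborFinset x₀) :
    G.dist x₀ y = G.dist x₀ x₀ + 1 := by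
  rw [SimpleGraph.mem_neighborFinset] at hy
  rw [SimpleGraph.dist_self, dist_root_eq_one G x₀ hG hy]

/-- Laplacian of a radial function at the root. -/
lemma graphLap_radial_root (hG : G.Connected) (hdeg₀ : G.degree x₀ = n 0) (g : ℕ → ℝ) :
    graphLap G (fun y => g (G.dist x₀ y)) x₀ = (n 0 : ℝ) * (g 0 - g 1) := by
  rw [graphLap]
  rw [Finset.sum_congr rfl (fun y hy => by
    rw [SimpleGraph.dist_self, nbr_root G x₀ hG hy, SimpleGraph.dist_self])]
  rw [Finset.sum_const, SimpleGraph.card_neighborFinset_eq_degree, hdeg₀,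
    nsmul_eq_mul]

/-- Laplacian of a radial function away from the root. -/
lemma graphLap_radial (hplus : ∀ x : V, mPlus G x₀ x = n (G.dist x₀ x))
    (hminus : ∀ x : V, x ≠ x₀ → mMinus G x₀ x = 1)
    (hdeg : ∀ x : V, x ≠ x₀ → G.degree x = n (G.dist x₀ x) + 1)
    (g : ℕ → ℝ) {x : V} (hx : x ≠ x₀) {r : ℕ} (hr : G.dist x₀ x = r + 1) :
    graphLap G (fun y => g (G.dist x₀ y)) x
      = (n (r+1) : ℝ) * (g (r+1) - g (r+2)) + (g (r+1) - g r) := by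
  rw [graphLap, sum_nbr_split G x₀ n hplus hminus hdeg hx]
  have h1 : ∑ y ∈ fwd G x₀ x, (g (G.dist x₀ x) - g (G.dist x₀ y))
      = (n (r+1) : ℝ) * (g (r+1) - g (r+2)) := by
    have e1 : ∀ y ∈ fwd G x₀ x, g (G.dist x₀ x) - g (G.dist x₀ y)
        = g (r+1) - g (r+2) := by
      intro y hy
      rw [fwd, Finset.mem_filter] at hy
      rw [hr, hy.2, hr]
    rw [Finset.sum_congr rfl e1, Finset.sum_const, nsmul_eq_mul]
    have := fwd_card G x₀ n hplus x
    rw [hr] at this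
    rw [this]
  have h2 : ∑ y ∈ bwd G x₀ x, (g (G.dist x₀ x) - g (G.dist x₀ y))
      = g (r+1) - g r := by
    have e2 : ∀ y ∈ bwd G x₀ x, g (G.dist x₀ x) - g (G.dist x₀ y)
        = g (r+1) - g r := by
      intro y hy
      rw [bwd, Finset.mem_filter] at hy
      have hyr : G.dist x₀ y = r := by omega
      rw [hr, hyr]
    rw [Finset.sum_congr rfl e2, Finset.sum_const, bwd_card G x₀ hminus hx, one_nsmul]
  rw [h1, h2]


lemma swap_sum (f : V → ℝ) (S T : Finset V) (A B : V → Finset V)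
    (hAB : ∀ x y, (x ∈ S ∧ y ∈ A x) ↔ (y ∈ T ∧ x ∈ B y)) (c : ℕ)
    (hc : ∀ y ∈ T, (B y).card = c) :
    ∑ x ∈ S, ∑ y ∈ A x, f y = (c : ℝ) * ∑ y ∈ T, f y := by
  have key : ∑ x ∈ S, ∑ y ∈ A x, f y = ∑ y ∈ T, ∑ x ∈ B y, f y := by
    rw [Finset.sum_sigma', Finset.sum_sigma']
    refine Finset.sum_nbij' (fun p => ⟨p.2, p.1⟩) (fun p => ⟨p.2, p.1⟩) ?_ ?_ ?_ ?_ ?_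
    · rintro ⟨x, y⟩ hp
      rw [Finset.mem_sigma] at hp ⊢
      exact (hAB x y).mp ⟨hp.1, hp.2⟩
    · rintro ⟨y, x⟩ hp
      rw [Finset.mem_sigma] at hp ⊢
      exact (hAB x y).mpr ⟨hp.1, hp.2⟩
    · rintro ⟨x, y⟩ _; rfl
    · rintro ⟨y, x⟩ _; rfl
    · rintro ⟨x, y⟩ _; rfl
  rw [key, Finset.mul_sum]
  apply Finset.sum_congr rfl
  intro y hy
  rw [Finset.sum_const, hc y hy, nsmul_eq_mul]

lemma sph_zero : sph G x₀ 0 = {x₀} := by rw [sph]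

lemma sph_one (hG : G.Connected) : sph G x₀ 1 = G.neighborFinset x₀ := by
  letI := Classical.decEq V
  rw [sph, sph_zero, Finset.singleton_biUnion]
  exact Finset.filter_true_of_mem (fun y hy => nbr_root G x₀ hG hy)

lemma sph_card_le (hplus : ∀ x : V, mPlus G x₀ x = n (G.dist x₀ x)) (hG : G.Connected)
    (r : ℕ) : (sph G x₀ (r+1)).card ≤ n r * (sph G x₀ r).card := by
  letI := Classical.decEq V
  rw [sph]
  refine (Finset.card_biUnion_le).trans ?_
  rw [Finset.sum_congr rfl (fun z hz => ?_), Finset.sum_const, smul_eq_mul, mul_comm]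
  show mPlus G x₀ z = n r
  rw [hplus z, (mem_sph G x₀ hG r z).mp hz]

lemma fwd_eq_filter (hG : G.Connected) {r : ℕ} {x : V} (hx : G.dist x₀ x = r) :
    ∀ y, y ∈ fwd G x₀ x ↔ y ∈ sph G x₀ (r+1) ∧ G.Adj x y := by
  intro y
  rw [fwd, Finset.mem_filter, SimpleGraph.mem_neighborFinset, mem_sph G x₀ hG, hx]
  tauto

lemma bwd_eq_filter (hG : G.Connected) {r : ℕ} {x : V} (hx : G.dist x₀ x = r + 1) :
    ∀ y, y ∈ bwd G x₀ x ↔ y ∈ sph G x₀ r ∧ G.Adj x y := by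
  intro y
  rw [bwd, Finset.mem_filter, SimpleGraph.mem_neighborFinset, mem_sph G x₀ hG, hx]
  constructor
  · rintro ⟨h1, h2⟩; exact ⟨by omega, h1⟩
  · rintro ⟨h1, h2⟩; exact ⟨h2, by omega⟩

lemma ne_root_of_sph (hG : G.Connected) {r : ℕ} {x : V} (hx : x ∈ sph G x₀ (r+1)) :
    x ≠ x₀ := by
  intro h
  rw [mem_sph G x₀ hG] at hx
  rw [h, SimpleGraph.dist_self] at hx
  omega

lemma sphere_root (hG : G.Connected) (hdeg₀ : G.degree x₀ = n 0)
    (v : V → ℝ) (l : ℝ) (hlap : ∀ x, graphLap G v x = l * v x) :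
    ∑ x ∈ sph G x₀ 1, v x = ((n 0 : ℝ) - l) * v x₀ := by
  have h := hlap x₀
  rw [graphLap, Finset.sum_sub_distrib, Finset.sum_const,
    SimpleGraph.card_neighborFinset_eq_degree, hdeg₀, nsmul_eq_mul] at h
  rw [sph_one G x₀ hG]
  linarith

lemma sphere_step (hG : G.Connected)
    (hplus : ∀ x : V, mPlus G x₀ x = n (G.dist x₀ x))
    (hminus : ∀ x : V, x ≠ x₀ → mMinus G x₀ x = 1)
    (hdeg : ∀ x : V, x ≠ x₀ → G.degree x = n (G.dist x₀ x) + 1)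
    (v : V → ℝ) (l : ℝ) (hlap : ∀ x, graphLap G v x = l * v x) (r : ℕ) :
    ∑ x ∈ sph G x₀ (r+2), v x
      = ((n (r+1) : ℝ) + 1 - l) * (∑ x ∈ sph G x₀ (r+1), v x)
        - (n r : ℝ) * (∑ x ∈ sph G x₀ r, v x) := by
  have hdist : ∀ x ∈ sph G x₀ (r+1), G.dist x₀ x = r + 1 :=
    fun x hx => (mem_sph G x₀ hG (r+1) x).mp hx
  have hne : ∀ x ∈ sph G x₀ (r+1), x ≠ x₀ :=
    fun x hx => ne_root_of_sph G x₀ hG hx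
  -- pointwise decomposition of the Laplacian
  have hpt : ∀ x ∈ sph G x₀ (r+1),
      l * v x = ((n (r+1) : ℝ) + 1) * v x
        - ((∑ y ∈ fwd G x₀ x, v y) + (∑ y ∈ bwd G x₀ x, v y)) := by
    intro x hx
    have h := hlap x
    rw [graphLap, Finset.sum_sub_distrib, Finset.sum_const,
      SimpleGraph.card_neighborFinset_eq_degree, hdeg x (hne x hx), nsmul_eq_mul,
      sum_nbr_split G x₀ n hplus hminus hdeg (hne x hx), hdist x hx] at h
    rw [← h]
    push_cast
    ring
  have hsum := Finset.sum_congr rfl hpt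
  rw [← Finset.mul_sum] at hsum
  rw [Finset.sum_sub_distrib, ← Finset.mul_sum, Finset.sum_add_distrib] at hsum
  -- forward double count
  have hF : ∑ x ∈ sph G x₀ (r+1), ∑ y ∈ fwd G x₀ x, v y
      = (1 : ℕ) * ∑ y ∈ sph G x₀ (r+2), v y := by
    apply swap_sum v _ _ _ (fun y => bwd G x₀ y)
    · intro x y
      constructor
      · rintro ⟨hx, hy⟩
        rw [fwd_eq_filter G x₀ hG (hdist x hx) y] at hy
        exact ⟨hy.1, (bwd_eq_filter G x₀ hG ((mem_sph G x₀ hG _ y).mp hy.1) x).mpr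
          ⟨hx, hy.2.symm⟩⟩
      · rintro ⟨hy, hx⟩
        rw [bwd_eq_filter G x₀ hG ((mem_sph G x₀ hG _ y).mp hy) x] at hx
        exact ⟨hx.1, (fwd_eq_filter G x₀ hG (hdist x hx.1) y).mpr ⟨hy, hx.2.symm⟩⟩
    · intro y hy
      exact hminus y (ne_root_of_sph G x₀ hG hy)
  -- backward double count
  have hB : ∑ x ∈ sph G x₀ (r+1), ∑ y ∈ bwd G x₀ x, v y
      = (n r : ℕ) * ∑ y ∈ sph G x₀ r, v y := by
    apply swap_sum v _ _ _ (fun y => fwd G x₀ y)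
    · intro x y
      constructor
      · rintro ⟨hx, hy⟩
        rw [bwd_eq_filter G x₀ hG (hdist x hx) y] at hy
        exact ⟨hy.1, (fwd_eq_filter G x₀ hG ((mem_sph G x₀ hG _ y).mp hy.1) x).mpr
          ⟨hx, hy.2.symm⟩⟩
      · rintro ⟨hy, hx⟩
        rw [fwd_eq_filter G x₀ hG ((mem_sph G x₀ hG _ y).mp hy) x] at hx
        exact ⟨hx.1, (bwd_eq_filter G x₀ hG (hdist x hx.1) y).mpr ⟨hy, hx.2.symm⟩⟩
    · intro y hy
      rw [fwd_card G x₀ n hplus y, (mem_sph G x₀ hG r y).mp hy]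
  rw [hF, hB] at hsum
  push_cast at hsum ⊢
  linarith

end Graph


/-- **Stochastic completeness of model trees.**  Let `G` be a model tree with root `x₀`
and branching numbers `n(r) ≥ 1`: every vertex at distance `r` from `x₀` has exactly
`n(r)` neighbors at distance `r+1`, every vertex other than the root has exactly one
neighbor at distance `r-1`, the root has valence `n(0)`, and every other vertex at
distance `r` has valence `n(r) + 1`.  Then there exists a bounded positive `λ`-harmonic
function (`Δv = λv`) for every `λ < 0` — i.e. the tree is stochastically incomplete —
if and only if `∑_{r} 1/n(r) < ∞`. -/
theorem model_tree_stochastically_complete_iff {V : Type*} [Infinite V]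
    (G : SimpleGraph V) [G.LocallyFinite] (hG : G.Connected) (x₀ : V)
    (n : ℕ → ℕ) (hn : ∀ r, 1 ≤ n r)
    (hplus : ∀ x : V, mPlus G x₀ x = n (G.dist x₀ x))
    (hminus : ∀ x : V, x ≠ x₀ → mMinus G x₀ x = 1)
    (hdeg₀ : G.degree x₀ = n 0)
    (hdeg : ∀ x : V, x ≠ x₀ → G.degree x = n (G.dist x₀ x) + 1) :
    (∀ l : ℝ, l < 0 →
        ∃ v : V → ℝ, ∃ C : ℝ, (∀ x, 0 < v x) ∧ (∀ x, v x ≤ C) ∧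
          ∀ x, graphLap G v x = l * v x) ↔
      Summable (fun r : ℕ => 1 / (n r : ℝ)) := by
  have npos : ∀ r, (0:ℝ) < n r := fun r => by exact_mod_cast hn r
  constructor
  · -- a bounded positive λ-harmonic function forces summability
    intro h
    obtain ⟨v, C, hpos, hbd, hlap⟩ := h (-1) (by norm_num)
    have hCpos : 0 < C := lt_of_lt_of_le (hpos x₀) (hbd x₀)
    have hV0 : ∑ x ∈ sph G x₀ 0, v x = v x₀ := by
      rw [sph_zero, Finset.sum_singleton]
    have hVnonneg : ∀ r, 0 ≤ ∑ x ∈ sph G x₀ r, v x :=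
      fun r => Finset.sum_nonneg (fun x _ => (hpos x).le)
    have hstep : ∀ r, ((n r : ℝ) + 1) * (∑ x ∈ sph G x₀ r, v x)
        ≤ ∑ x ∈ sph G x₀ (r+1), v x := by
      intro r
      induction r with
      | zero =>
          have h1 := sphere_root G x₀ n hG hdeg₀ v (-1) hlap
          rw [hV0, h1]
          nlinarith [hpos x₀]
      | succ r ih =>
          have hs := sphere_step G x₀ n hG hplus hminus hdeg v (-1) hlap r
          have h1 : (n r : ℝ) * (∑ x ∈ sph G x₀ r, v x) ≤ ∑ x ∈ sph G x₀ (r+1), v x := by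
            nlinarith [hVnonneg r, ih]
          nlinarith [hVnonneg (r+1)]
    have hprod : ∀ r, (∏ k ∈ Finset.range r, ((n k : ℝ) + 1)) * v x₀
        ≤ ∑ x ∈ sph G x₀ r, v x := by
      intro r
      induction r with
      | zero => simp [hV0]
      | succ r ih =>
          rw [Finset.prod_range_succ]
          have h2 := hstep r
          have h3 : (0:ℝ) < (n r : ℝ) + 1 := by linarith [npos r]
          nlinarith [hpos x₀, Finset.prod_nonneg (fun k (_ : k ∈ Finset.range r) =>
            by linarith [npos k] : ∀ k ∈ Finset.range r, (0:ℝ) ≤ (n k : ℝ) + 1)]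
    have hcardN : ∀ r, (sph G x₀ r).card ≤ ∏ k ∈ Finset.range r, n k := by
      intro r
      induction r with
      | zero => rw [sph_zero]; simp
      | succ r ih =>
          rw [Finset.prod_range_succ]
          calc (sph G x₀ (r+1)).card ≤ n r * (sph G x₀ r).card :=
                sph_card_le G x₀ n hplus hG r
            _ ≤ n r * ∏ k ∈ Finset.range r, n k := Nat.mul_le_mul_left _ ih
            _ = (∏ k ∈ Finset.range r, n k) * n r := Nat.mul_comm _ _
    have hVle : ∀ r, ∑ x ∈ sph G x₀ r, v x ≤ C * ∏ k ∈ Finset.range r, (n k : ℝ) := by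
      intro r
      calc ∑ x ∈ sph G x₀ r, v x ≤ (sph G x₀ r).card • C :=
            Finset.sum_le_card_nsmul _ _ _ (fun x _ => hbd x)
        _ = ((sph G x₀ r).card : ℝ) * C := nsmul_eq_mul _ _
        _ ≤ ((∏ k ∈ Finset.range r, n k : ℕ) : ℝ) * C := by
            apply mul_le_mul_of_nonneg_right _ hCpos.le
            exact_mod_cast hcardN r
        _ = C * ∏ k ∈ Finset.range r, (n k : ℝ) := by
            rw [Nat.cast_prod, mul_comm]
    apply summable_of_sum_range_le (c := C / v x₀)
      (fun r => by positivity)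
    intro r
    have hprodpos : (0:ℝ) < ∏ k ∈ Finset.range r, (n k : ℝ) :=
      Finset.prod_pos (fun k _ => npos k)
    have hchain : (∏ k ∈ Finset.range r, ((n k : ℝ) + 1)) * v x₀
        ≤ C * ∏ k ∈ Finset.range r, (n k : ℝ) := (hprod r).trans (hVle r)
    have hsplit : ∏ k ∈ Finset.range r, (1 + 1 / (n k : ℝ))
        = (∏ k ∈ Finset.range r, ((n k : ℝ) + 1)) / ∏ k ∈ Finset.range r, (n k : ℝ) := by
      rw [← Finset.prod_div_distrib]
      apply Finset.prod_congr rfl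
      intro k _
      rw [add_div, div_self (npos k).ne']
    have hone : 1 + ∑ k ∈ Finset.range r, 1 / (n k : ℝ)
        ≤ ∏ k ∈ Finset.range r, (1 + 1 / (n k : ℝ)) := by
      clear hchain hsplit hprodpos
      induction r with
      | zero => simp
      | succ r ih =>
          rw [Finset.prod_range_succ, Finset.sum_range_succ]
          have hs0 : (0:ℝ) ≤ ∑ k ∈ Finset.range r, 1 / (n k : ℝ) :=
            Finset.sum_nonneg (fun k _ => by positivity)
          have ha0 : (0:ℝ) ≤ 1 / (n r : ℝ) := by positivity
          nlinarith [ih]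
    have hdiv : (∏ k ∈ Finset.range r, ((n k : ℝ) + 1)) / ∏ k ∈ Finset.range r, (n k : ℝ)
        ≤ C / v x₀ := by
      rw [div_le_div_iff₀ hprodpos (hpos x₀)]
      nlinarith [hchain]
    rw [hsplit] at hone
    linarith
  · -- summability allows the construction of a radial harmonic function
    intro hs l hl
    obtain ⟨C, hC⟩ := gSeq_bounded hl hn hs
    set g : ℕ → ℝ := fun r => (gSeq l n r).1 with hg
    refine ⟨fun y => g (G.dist x₀ y), C, fun x => (gSeq_pos hl hn _).1,
      fun x => hC _, ?_⟩
    intro x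
    show graphLap G (fun y => g (G.dist x₀ y)) x = l * g (G.dist x₀ x)
    by_cases hx : x = x₀
    · rw [hx]
      rw [graphLap_radial_root G x₀ n hG hdeg₀ g, SimpleGraph.dist_self]
      have h0 : g 0 = 1 := rfl
      have hu0 : (gSeq l n 0).2 = -l / n 0 := rfl
      have h1 : g 1 = g 0 + (gSeq l n 0).2 := gSeq_fst_succ l n 0
      rw [h0] at h1 ⊢
      rw [h1, hu0]
      field_simp
      rw [show (1:ℝ) - (1 + -(l / n 0)) = l / n 0 by ring, mul_comm, div_mul_cancel₀ _ (npos 0).ne']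
    · have hd : 0 < G.dist x₀ x := hG.pos_dist_of_ne (Ne.symm hx)
      obtain ⟨r, hr⟩ : ∃ r, G.dist x₀ x = r + 1 := ⟨G.dist x₀ x - 1, by omega⟩
      rw [graphLap_radial G x₀ n hplus hminus hdeg g hx hr, hr]
      have hg2 : g (r+2) = g (r+1) + (gSeq l n (r+1)).2 := gSeq_fst_succ l n (r+1)
      have hg1 : g (r+1) = g r + (gSeq l n r).2 := gSeq_fst_succ l n r
      have hmul : (n (r+1) : ℝ) * (gSeq l n (r+1)).2
          = (gSeq l n r).2 - l * g (r+1) := by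
        rw [gSeq_snd_succ l n r, mul_comm, div_mul_cancel₀ _ (npos (r+1)).ne']
      rw [hg2, hg1] at *
      ring_nf
      ring_nf at hmul
      linarith [hmul]
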